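/- arXiv:1405.6370 — 2 statements merged into one kernel-verified Lean document; each statement's English description precedes it below -/
import Mathlib

section
/- (Duality theorem) If (X_i) are i.i.d. ℝ²-valued random variables, R_{t_n} = u + ∑_{i=1}^n X_i, and W_n is the reflected walk with W_0 = 0 and W_{n+1} = (W_n - X_{n+1}) ⊔ 0, then P(R_{t_i} ⪰ 0 for all i = 1,...,n | R_0 = u) = P(W_n ⪯ u). -/
open MeasureTheory ProbabilityTheory

lemma duality_sum_ite_fin {M : Type*} [AddCommMonoid M] (n i : ℕ) (f : ℕ → M) :
    (∑ j : Fin n, if (j : ℕ) < i then f (j : ℕ) else 0)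
      = ∑ j ∈ (Finset.range n).filter (fun m => m < i), f j := by
  rw [Fin.sum_univ_eq_sum_range (fun m => if m < i then f m else 0) n, Finset.sum_filter]

lemma duality_sum_ite_fin' {M : Type*} [AddCommMonoid M] {n i : ℕ} (hi : i ≤ n) (f : ℕ → M) :
    (∑ j : Fin n, if (j : ℕ) < i then f (j : ℕ) else 0) = ∑ j ∈ Finset.range i, f j := by
  rw [duality_sum_ite_fin]
  congr 1
  ext m
  simp only [Finset.mem_filter, Finset.mem_range]
  omega

lemma duality_sum_rev {M : Type*} [AddCommMonoid M] {n i : ℕ} (hi : i ≤ n) (f : ℕ → M) :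
    ∑ j ∈ Finset.range i, f (n - j) = ∑ m ∈ Finset.Ico (n - i) n, f (m + 1) := by
  refine Finset.sum_nbij' (fun j => n - 1 - j) (fun m => n - 1 - m) ?_ ?_ ?_ ?_ ?_ <;>
    simp only [Finset.mem_range, Finset.mem_Ico]
  · intro a ha; omega
  · intro a ha; omega
  · intro a ha; omega
  · intro a ha; omega
  · intro a ha
    congr 1
    omega

lemma duality_joint_law {Ω : Type*} [MeasurableSpace Ω] (μ : Measure Ω) [IsProbabilityMeasure μ]
    (X : ℕ → Ω → ℝ × ℝ) (hmeas : ∀ i, Measurable (X i))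
    (hindep : iIndepFun X μ)
    {n : ℕ} (g : Fin n → ℕ) (hg : Function.Injective g) :
    μ.map (fun ω (j : Fin n) => X (g j) ω) = Measure.pi (fun j => μ.map (X (g j))) := by
  classical
  have hT : Measurable (fun ω (j : Fin n) => X (g j) ω) :=
    measurable_pi_lambda _ fun j => hmeas _
  haveI : ∀ j : Fin n, IsProbabilityMeasure (μ.map (X (g j))) :=
    fun j => Measure.isProbabilityMeasure_map (hmeas _).aemeasurable
  symm
  apply Measure.pi_eq
  intro s hs
  rw [Measure.map_apply hT (MeasurableSet.univ_pi hs)]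
  set sets : ℕ → Set (ℝ × ℝ) :=
    fun i => if h : ∃ j, g j = i then s h.choose else Set.univ with hsets
  have hsets_g : ∀ j : Fin n, sets (g j) = s j := by
    intro j
    have h : ∃ j', g j' = g j := ⟨j, rfl⟩
    have hc : h.choose = j := hg h.choose_spec
    simp only [hsets, dif_pos h]
    rw [hc]
  have hms : ∀ i, MeasurableSet (sets i) := by
    intro i
    simp only [hsets]
    split_ifs with h
    · exact hs _
    · exact MeasurableSet.univ
  have hpre : (fun ω (j : Fin n) => X (g j) ω) ⁻¹' Set.pi Set.univ s
      = ⋂ i ∈ Finset.image g Finset.univ, X i ⁻¹' sets i := by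
    ext ω
    simp only [Set.mem_preimage, Set.mem_pi, Set.mem_univ, forall_true_left, Set.mem_iInter,
      Finset.mem_image, Finset.mem_univ, true_and]
    constructor
    · rintro h i ⟨j, rfl⟩
      rw [hsets_g]; exact h j
    · intro h j
      have := h (g j) ⟨j, rfl⟩
      rwa [hsets_g] at this
  rw [hpre, hindep.measure_inter_preimage_eq_mul _ (fun i _ => hms i),
    Finset.prod_image (fun a _ b _ h => hg h)]
  refine Finset.prod_congr rfl fun j _ => ?_
  rw [Measure.map_apply (hmeas _) (hs j), hsets_g]

lemma duality_W_char {Ω : Type*} (X : ℕ → Ω → ℝ × ℝ) (W : ℕ → Ω → ℝ × ℝ)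
    (hW0 : ∀ ω, W 0 ω = 0) (hWrec : ∀ n ω, W (n + 1) ω = (W n ω - X (n + 1) ω) ⊔ 0)
    (n : ℕ) : ∀ (u : ℝ × ℝ) (ω : Ω),
      W n ω ≤ u ↔ ∀ k, k ≤ n → 0 ≤ u + ∑ i ∈ Finset.Ico k n, X (i + 1) ω := by
  induction n with
  | zero =>
    intro u ω
    simp only [hW0, Nat.le_zero]
    constructor
    · rintro h k rfl
      simpa using h
    · intro h
      simpa using h 0 rfl
  | succ n ih =>
    intro u ω
    rw [hWrec, sup_le_iff, sub_le_iff_le_add, ih (u + X (n + 1) ω) ω]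
    constructor
    · rintro ⟨h1, h2⟩ k hk
      rcases Nat.lt_succ_iff_lt_or_eq.mp (Nat.lt_succ_of_le hk) with hk' | rfl
      · have hkn : k ≤ n := by omega
        have := h1 k hkn
        rw [Finset.sum_Ico_succ_top hkn]
        have e : u + (∑ i ∈ Finset.Ico k n, X (i + 1) ω + X (n + 1) ω)
            = u + X (n + 1) ω + ∑ i ∈ Finset.Ico k n, X (i + 1) ω := by ring
        rw [e]; exact this
      · simpa using h2
    · intro h
      refine ⟨fun k hk => ?_, by simpa using h (n + 1) le_rfl⟩
      have := h k (by omega)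
      rw [Finset.sum_Ico_succ_top (by omega)] at this
      have e : u + X (n + 1) ω + ∑ i ∈ Finset.Ico k n, X (i + 1) ω
          = u + (∑ i ∈ Finset.Ico k n, X (i + 1) ω + X (n + 1) ω) := by ring
      rw [e]; exact this

/-- (Duality) If `(X_i)` are i.i.d. `ℝ²`-valued random variables,
`R_{t_n} = u + ∑_{i=1}^n X_i`, and `W_n` is the reflected walk with `W_0 = 0`,
`W_{n+1} = (W_n - X_{n+1}) ⊔ 0`, then
`P(R_{t_i} ⪰ 0, i = 1,…,n | R_0 = u) = P(W_n ⪯ u)` (componentwise order). -/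
theorem stmt_7 {Ω : Type*} [MeasurableSpace Ω] (μ : Measure Ω) [IsProbabilityMeasure μ]
    (X : ℕ → Ω → ℝ × ℝ) (hmeas : ∀ i, Measurable (X i))
    (hindep : iIndepFun X μ)
    (hident : ∀ i j, IdentDistrib (X i) (X j) μ μ)
    (u : ℝ × ℝ) (hu : 0 ≤ u)
    (R : ℕ → Ω → ℝ × ℝ) (hR : ∀ k ω, R k ω = u + ∑ i ∈ Finset.range k, X (i + 1) ω)
    (W : ℕ → Ω → ℝ × ℝ) (hW0 : ∀ ω, W 0 ω = 0)
    (hWrec : ∀ n ω, W (n + 1) ω = (W n ω - X (n + 1) ω) ⊔ 0)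
    (n : ℕ) :
    μ {ω | ∀ i, 1 ≤ i → i ≤ n → 0 ≤ R i ω} = μ {ω | W n ω ≤ u} := by
  classical
  set g1 : Fin n → ℕ := fun j => (j : ℕ) + 1 with hg1def
  set g2 : Fin n → ℕ := fun j => n - (j : ℕ) with hg2def
  have hg1 : Function.Injective g1 := by
    intro a b h
    simp only [hg1def] at h
    exact Fin.ext (by omega)
  have hg2 : Function.Injective g2 := by
    intro a b h
    have ha := a.isLt
    have hb := b.isLt
    simp only [hg2def] at h
    exact Fin.ext (by omega)
  set A : Set (Fin n → ℝ × ℝ) :=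
    {v | ∀ i : ℕ, i ≤ n → 0 ≤ u + ∑ j : Fin n, if (j : ℕ) < i then v j else 0} with hAdef
  have hA : MeasurableSet A := by
    have : A = ⋂ (i : ℕ) (_ : i ≤ n),
        (fun v : Fin n → ℝ × ℝ => u + ∑ j : Fin n, if (j : ℕ) < i then v j else 0) ⁻¹'
          Set.Ici 0 := by
      ext v
      simp [hAdef, Set.mem_iInter]
    rw [this]
    refine MeasurableSet.iInter fun i => MeasurableSet.iInter fun _ => ?_
    have hm : Measurable
        (fun v : Fin n → ℝ × ℝ => u + ∑ j : Fin n, if (j : ℕ) < i then v j else 0) := by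
      refine measurable_const.add (Finset.measurable_sum _ fun j _ => ?_)
      split_ifs
      · exact measurable_pi_apply j
      · exact measurable_const
    exact hm measurableSet_Ici
  have hT1 : Measurable (fun ω (j : Fin n) => X (g1 j) ω) :=
    measurable_pi_lambda _ fun j => hmeas _
  have hT2 : Measurable (fun ω (j : Fin n) => X (g2 j) ω) :=
    measurable_pi_lambda _ fun j => hmeas _
  have hlaw : μ.map (fun ω (j : Fin n) => X (g1 j) ω)
      = μ.map (fun ω (j : Fin n) => X (g2 j) ω) := by
    rw [duality_joint_law μ X hmeas hindep g1 hg1, duality_joint_law μ X hmeas hindep g2 hg2]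
    exact congrArg Measure.pi (funext fun j => (hident (g1 j) (g2 j)).map_eq)
  have hER : {ω | ∀ i, 1 ≤ i → i ≤ n → 0 ≤ R i ω}
      = (fun ω (j : Fin n) => X (g1 j) ω) ⁻¹' A := by
    ext ω
    simp only [Set.mem_setOf_eq, Set.mem_preimage, hAdef]
    constructor
    · intro h i hi
      rw [duality_sum_ite_fin' hi (fun m => X (m + 1) ω)]
      rcases Nat.eq_zero_or_pos i with rfl | hpos
      · simpa using hu
      · have := h i hpos hi
        rwa [hR] at this
    · intro h i hi1 hi2
      rw [hR]
      have := h i hi2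
      rwa [duality_sum_ite_fin' hi2 (fun m => X (m + 1) ω)] at this
  have hEW : {ω | W n ω ≤ u} = (fun ω (j : Fin n) => X (g2 j) ω) ⁻¹' A := by
    ext ω
    rw [Set.mem_setOf_eq, duality_W_char X W hW0 hWrec n u ω]
    simp only [Set.mem_preimage, hAdef, Set.mem_setOf_eq]
    constructor
    · intro h i hi
      rw [duality_sum_ite_fin' hi (fun m => X (n - m) ω), duality_sum_rev hi (fun m => X m ω)]
      exact h (n - i) (by omega)
    · intro h k hk
      have := h (n - k) (by omega)
      rw [duality_sum_ite_fin' (by omega : n - k ≤ n) (fun m => X (n - m) ω),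
        duality_sum_rev (by omega : n - k ≤ n) (fun m => X m ω)] at this
      have e : n - (n - k) = k := by omega
      rwa [e] at this
  rw [hER, hEW, ← Measure.map_apply hT1 hA, ← Measure.map_apply hT2 hA, hlaw]
end

section
/- Let W and X be independent ℝ²-valued random variables and W' = (W − X) ⊔ 0 componentwise. Then for s₁, s₂ with Re s₁ = Re s₂ = 0, E[e^{−s₁ W'^{(1)} − s₂ W'^{(2)}}] equals E[e^{s₁ X^{(1)} + s₂ X^{(2)}}]·E[e^{−s₁ W^{(1)} − s₂ W^{(2)}}] plus the three boundary correction terms: E[e^{−s₁(W^{(1)}−X^{(1)})}(1 − e^{−s₂(W^{(2)}−X^{(2)})}) 1_{W^{(1)}>X^{(1)}, W^{(2)}≤X^{(2)}}] + E[e^{−s₂(W^{(2)}−X^{(2)})}(1 − e^{−s₁(W^{(1)}−X^{(1)})}) 1_{W^{(1)}≤X^{(1)}, W^{(2)}>X^{(2)}}] + E[(1 − e^{−s₁(W^{(1)}−X^{(1)}) − s₂(W^{(2)}−X^{(2)})}) 1_{W^{(1)}≤X^{(1)}, W^{(2)}≤X^{(2)}}]. -/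
open MeasureTheory ProbabilityTheory

lemma key_pt (s₁ s₂ : ℂ) (w₁ w₂ x₁ x₂ : ℝ) :
    Complex.exp (-s₁ * ((max (w₁ - x₁) 0 : ℝ) : ℂ) - s₂ * ((max (w₂ - x₂) 0 : ℝ) : ℂ))
      = Complex.exp (s₁ * x₁ + s₂ * x₂) * Complex.exp (-s₁ * w₁ - s₂ * w₂)
        + (if x₁ < w₁ ∧ w₂ ≤ x₂ then
            Complex.exp (-s₁ * ((w₁ - x₁ : ℝ) : ℂ)) * (1 - Complex.exp (-s₂ * ((w₂ - x₂ : ℝ) : ℂ)))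
          else 0)
        + (if w₁ ≤ x₁ ∧ x₂ < w₂ then
            Complex.exp (-s₂ * ((w₂ - x₂ : ℝ) : ℂ)) * (1 - Complex.exp (-s₁ * ((w₁ - x₁ : ℝ) : ℂ)))
          else 0)
        + (if w₁ ≤ x₁ ∧ w₂ ≤ x₂ then
            1 - Complex.exp (-s₁ * ((w₁ - x₁ : ℝ) : ℂ) - s₂ * ((w₂ - x₂ : ℝ) : ℂ))
          else 0) := by
  have hprod : Complex.exp (s₁ * x₁ + s₂ * x₂) * Complex.exp (-s₁ * w₁ - s₂ * w₂)
      = Complex.exp (-s₁ * ((w₁ - x₁ : ℝ) : ℂ)) * Complex.exp (-s₂ * ((w₂ - x₂ : ℝ) : ℂ)) := by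
    rw [← Complex.exp_add, ← Complex.exp_add]
    push_cast; ring_nf
  have hsub : Complex.exp (-s₁ * ((w₁ - x₁ : ℝ) : ℂ) - s₂ * ((w₂ - x₂ : ℝ) : ℂ))
      = Complex.exp (-s₁ * ((w₁ - x₁ : ℝ) : ℂ)) * Complex.exp (-s₂ * ((w₂ - x₂ : ℝ) : ℂ)) := by
    rw [← Complex.exp_add]; ring_nf
  rw [hprod, hsub]
  rcases le_or_gt w₁ x₁ with h1 | h1 <;> rcases le_or_gt w₂ x₂ with h2 | h2
  · rw [max_eq_right (by linarith), max_eq_right (by linarith),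
      if_neg (by rintro ⟨hA, hB⟩; linarith), if_neg (by rintro ⟨hA, hB⟩; linarith),
      if_pos ⟨h1, h2⟩]
    push_cast; ring_nf
    simp
  · rw [max_eq_right (by linarith), max_eq_left (by linarith),
      if_neg (by rintro ⟨hA, hB⟩; linarith), if_pos ⟨h1, h2⟩,
      if_neg (by rintro ⟨hA, hB⟩; linarith)]
    push_cast; ring_nf
  · rw [max_eq_left (by linarith), max_eq_right (by linarith),
      if_pos ⟨h1, h2⟩, if_neg (by rintro ⟨hA, hB⟩; linarith),
      if_neg (by rintro ⟨hA, hB⟩; linarith)]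
    push_cast; ring_nf
  · rw [max_eq_left (by linarith), max_eq_left (by linarith),
      if_neg (by rintro ⟨hA, hB⟩; linarith), if_neg (by rintro ⟨hA, hB⟩; linarith),
      if_neg (by rintro ⟨hA, hB⟩; linarith)]
    push_cast; rw [← Complex.exp_add]; ring_nf

lemma norm_exp_of_re_eq_zero {z : ℂ} (hz : z.re = 0) : ‖Complex.exp z‖ = 1 := by
  rw [Complex.norm_exp, hz, Real.exp_zero]

/-- One step of the Lindley recursion in transforms: if `W ≥ 0` a.s. and `X` are
independent `ℝ²`-valued random vectors, `W' = (W − X) ⊔ 0` componentwise, and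
`Re s₁ = Re s₂ = 0`, then `E e^{−s₁W'¹−s₂W'²}` equals
`E e^{s₁X¹+s₂X²} · E e^{−s₁W¹−s₂W²}` plus the three boundary correction terms. -/
theorem stmt_13 {Ω : Type*} [MeasurableSpace Ω] (μ : Measure Ω) [IsProbabilityMeasure μ]
    (W X : Ω → ℝ × ℝ) (hWmeas : Measurable W) (hXmeas : Measurable X)
    (hWpos : ∀ᵐ ω ∂μ, 0 ≤ W ω)
    (hindep : IndepFun W X μ)
    (s₁ s₂ : ℂ) (hs₁ : s₁.re = 0) (hs₂ : s₂.re = 0)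
    (W' : Ω → ℝ × ℝ) (hW' : ∀ ω, W' ω = (W ω - X ω) ⊔ 0) :
    (∫ ω, Complex.exp (-s₁ * ((W' ω).1 : ℂ) - s₂ * ((W' ω).2 : ℂ)) ∂μ)
      = (∫ ω, Complex.exp (s₁ * ((X ω).1 : ℂ) + s₂ * ((X ω).2 : ℂ)) ∂μ)
          * (∫ ω, Complex.exp (-s₁ * ((W ω).1 : ℂ) - s₂ * ((W ω).2 : ℂ)) ∂μ)
        + (∫ ω, Set.indicator {ω | (X ω).1 < (W ω).1 ∧ (W ω).2 ≤ (X ω).2}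
            (fun ω => Complex.exp (-s₁ * (((W ω).1 - (X ω).1 : ℝ) : ℂ))
              * (1 - Complex.exp (-s₂ * (((W ω).2 - (X ω).2 : ℝ) : ℂ)))) ω ∂μ)
        + (∫ ω, Set.indicator {ω | (W ω).1 ≤ (X ω).1 ∧ (X ω).2 < (W ω).2}
            (fun ω => Complex.exp (-s₂ * (((W ω).2 - (X ω).2 : ℝ) : ℂ))
              * (1 - Complex.exp (-s₁ * (((W ω).1 - (X ω).1 : ℝ) : ℂ)))) ω ∂μ)
        + (∫ ω, Set.indicator {ω | (W ω).1 ≤ (X ω).1 ∧ (W ω).2 ≤ (X ω).2}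
            (fun ω => 1 - Complex.exp (-s₁ * (((W ω).1 - (X ω).1 : ℝ) : ℂ)
              - s₂ * (((W ω).2 - (X ω).2 : ℝ) : ℂ))) ω ∂μ) := by
  classical
  -- component measurability
  have hW1 : Measurable fun ω => (W ω).1 := measurable_fst.comp hWmeas
  have hW2 : Measurable fun ω => (W ω).2 := measurable_snd.comp hWmeas
  have hX1 : Measurable fun ω => (X ω).1 := measurable_fst.comp hXmeas
  have hX2 : Measurable fun ω => (X ω).2 := measurable_snd.comp hXmeas
  -- the four functions
  set F : ℝ × ℝ → ℂ := fun w => Complex.exp (-s₁ * (w.1 : ℂ) - s₂ * (w.2 : ℂ)) with hFdef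
  set G : ℝ × ℝ → ℂ := fun x => Complex.exp (s₁ * (x.1 : ℂ) + s₂ * (x.2 : ℂ)) with hGdef
  have hFcont : Continuous F := by fun_prop
  have hGcont : Continuous G := by fun_prop
  set g₁ : Ω → ℂ := Set.indicator {ω | (X ω).1 < (W ω).1 ∧ (W ω).2 ≤ (X ω).2}
      (fun ω => Complex.exp (-s₁ * (((W ω).1 - (X ω).1 : ℝ) : ℂ))
        * (1 - Complex.exp (-s₂ * (((W ω).2 - (X ω).2 : ℝ) : ℂ)))) with hg₁def
  set g₂ : Ω → ℂ := Set.indicator {ω | (W ω).1 ≤ (X ω).1 ∧ (X ω).2 < (W ω).2}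
      (fun ω => Complex.exp (-s₂ * (((W ω).2 - (X ω).2 : ℝ) : ℂ))
        * (1 - Complex.exp (-s₁ * (((W ω).1 - (X ω).1 : ℝ) : ℂ)))) with hg₂def
  set g₃ : Ω → ℂ := Set.indicator {ω | (W ω).1 ≤ (X ω).1 ∧ (W ω).2 ≤ (X ω).2}
      (fun ω => 1 - Complex.exp (-s₁ * (((W ω).1 - (X ω).1 : ℝ) : ℂ)
        - s₂ * (((W ω).2 - (X ω).2 : ℝ) : ℂ))) with hg₃def
  -- pointwise decomposition
  have hpt : ∀ ω, Complex.exp (-s₁ * ((W' ω).1 : ℂ) - s₂ * ((W' ω).2 : ℂ))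
      = G (X ω) * F (W ω) + g₁ ω + g₂ ω + g₃ ω := by
    intro ω
    have e1 : (W' ω).1 = max ((W ω).1 - (X ω).1) 0 := by
      rw [hW' ω]; rfl
    have e2 : (W' ω).2 = max ((W ω).2 - (X ω).2) 0 := by
      rw [hW' ω]; rfl
    rw [e1, e2, key_pt s₁ s₂ ((W ω).1) ((W ω).2) ((X ω).1) ((X ω).2)]
    simp only [hg₁def, hg₂def, hg₃def, Set.indicator_apply, Set.mem_setOf_eq, hFdef, hGdef]
  -- norm bounds
  have hnF : ∀ w : ℝ × ℝ, ‖F w‖ = 1 := fun w =>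
    norm_exp_of_re_eq_zero (by simp [Complex.sub_re, Complex.mul_re, hs₁, hs₂])
  have hnG : ∀ x : ℝ × ℝ, ‖G x‖ = 1 := fun x =>
    norm_exp_of_re_eq_zero (by simp [Complex.add_re, Complex.mul_re, hs₁, hs₂])
  have hnE : ∀ (s : ℂ), s.re = 0 → ∀ x : ℝ, ‖Complex.exp (-s * (x : ℂ))‖ = 1 := by
    intro s hs x
    exact norm_exp_of_re_eq_zero (by simp [Complex.mul_re, hs])
  -- integrability
  have hi₀ : Integrable (fun ω => G (X ω) * F (W ω)) μ := by
    refine (integrable_const (1 : ℝ)).mono' ?_ (ae_of_all _ fun ω => ?_)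
    · exact ((hGcont.measurable.comp hXmeas).mul (hFcont.measurable.comp hWmeas)).aestronglyMeasurable
    · rw [norm_mul, hnG, hnF, one_mul]
  have hS₁ : MeasurableSet {ω | (X ω).1 < (W ω).1 ∧ (W ω).2 ≤ (X ω).2} :=
    (measurableSet_lt hX1 hW1).inter (measurableSet_le hW2 hX2)
  have hS₂ : MeasurableSet {ω | (W ω).1 ≤ (X ω).1 ∧ (X ω).2 < (W ω).2} :=
    (measurableSet_le hW1 hX1).inter (measurableSet_lt hX2 hW2)
  have hS₃ : MeasurableSet {ω | (W ω).1 ≤ (X ω).1 ∧ (W ω).2 ≤ (X ω).2} :=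
    (measurableSet_le hW1 hX1).inter (measurableSet_le hW2 hX2)
  have hm1 : Measurable fun ω => Complex.exp (-s₁ * (((W ω).1 - (X ω).1 : ℝ) : ℂ)) := by fun_prop
  have hm2 : Measurable fun ω => Complex.exp (-s₂ * (((W ω).2 - (X ω).2 : ℝ) : ℂ)) := by fun_prop
  have hm3 : Measurable fun ω => Complex.exp (-s₁ * (((W ω).1 - (X ω).1 : ℝ) : ℂ)
      - s₂ * (((W ω).2 - (X ω).2 : ℝ) : ℂ)) := by fun_prop
  have hi₁ : Integrable g₁ μ := by
    refine (((integrable_const (2 : ℝ)).mono' ?_ (ae_of_all _ fun ω => ?_)).indicator hS₁)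
    · exact (hm1.mul (measurable_const.sub hm2)).aestronglyMeasurable
    · rw [norm_mul, hnE s₁ hs₁]
      calc (1 : ℝ) * ‖1 - Complex.exp (-s₂ * (((W ω).2 - (X ω).2 : ℝ) : ℂ))‖
          ≤ 1 * (‖(1 : ℂ)‖ + ‖Complex.exp (-s₂ * (((W ω).2 - (X ω).2 : ℝ) : ℂ))‖) := by
            gcongr; exact norm_sub_le _ _
        _ = 2 := by rw [hnE s₂ hs₂]; norm_num
  have hi₂ : Integrable g₂ μ := by
    refine (((integrable_const (2 : ℝ)).mono' ?_ (ae_of_all _ fun ω => ?_)).indicator hS₂)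
    · exact (hm2.mul (measurable_const.sub hm1)).aestronglyMeasurable
    · rw [norm_mul, hnE s₂ hs₂]
      calc (1 : ℝ) * ‖1 - Complex.exp (-s₁ * (((W ω).1 - (X ω).1 : ℝ) : ℂ))‖
          ≤ 1 * (‖(1 : ℂ)‖ + ‖Complex.exp (-s₁ * (((W ω).1 - (X ω).1 : ℝ) : ℂ))‖) := by
            gcongr; exact norm_sub_le _ _
        _ = 2 := by rw [hnE s₁ hs₁]; norm_num
  have hi₃ : Integrable g₃ μ := by
    refine (((integrable_const (2 : ℝ)).mono' ?_ (ae_of_all _ fun ω => ?_)).indicator hS₃)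
    · exact (measurable_const.sub hm3).aestronglyMeasurable
    · calc ‖1 - Complex.exp (-s₁ * (((W ω).1 - (X ω).1 : ℝ) : ℂ)
            - s₂ * (((W ω).2 - (X ω).2 : ℝ) : ℂ))‖
          ≤ ‖(1 : ℂ)‖ + ‖Complex.exp (-s₁ * (((W ω).1 - (X ω).1 : ℝ) : ℂ)
            - s₂ * (((W ω).2 - (X ω).2 : ℝ) : ℂ))‖ := norm_sub_le _ _
        _ = 2 := by
            rw [norm_exp_of_re_eq_zero (by simp [Complex.sub_re, Complex.mul_re, hs₁, hs₂])]
            norm_num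
  -- split the integral
  have hsplit : (∫ ω, Complex.exp (-s₁ * ((W' ω).1 : ℂ) - s₂ * ((W' ω).2 : ℂ)) ∂μ)
      = (∫ ω, G (X ω) * F (W ω) ∂μ) + (∫ ω, g₁ ω ∂μ) + (∫ ω, g₂ ω ∂μ) + (∫ ω, g₃ ω ∂μ) := by
    rw [integral_congr_ae (ae_of_all _ hpt)]
    have h3 := integral_add ((hi₀.add hi₁).add hi₂) hi₃
    have h2 := integral_add (hi₀.add hi₁) hi₂
    have h1 := integral_add hi₀ hi₁
    simp only [Pi.add_apply] at h3 h2 h1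
    rw [h3, h2, h1]
  -- independence gives the product
  have hPW : IsProbabilityMeasure (μ.map W) := Measure.isProbabilityMeasure_map hWmeas.aemeasurable
  have hPX : IsProbabilityMeasure (μ.map X) := Measure.isProbabilityMeasure_map hXmeas.aemeasurable
  have hmap : μ.map (fun ω => (W ω, X ω)) = (μ.map W).prod (μ.map X) :=
    (indepFun_iff_map_prod_eq_prod_map_map hWmeas.aemeasurable hXmeas.aemeasurable).mp hindep
  have hprod : (∫ ω, G (X ω) * F (W ω) ∂μ) = (∫ ω, G (X ω) ∂μ) * (∫ ω, F (W ω) ∂μ) := by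
    have h1 : (∫ ω, G (X ω) * F (W ω) ∂μ)
        = ∫ p : (ℝ × ℝ) × (ℝ × ℝ), F p.1 * G p.2 ∂(μ.map (fun ω => (W ω, X ω))) := by
      rw [integral_map (hWmeas.prodMk hXmeas).aemeasurable
        (Continuous.aestronglyMeasurable
          (by fun_prop : Continuous fun p : (ℝ × ℝ) × (ℝ × ℝ) => F p.1 * G p.2))]
      exact integral_congr_ae (ae_of_all _ fun ω => (mul_comm _ _))
    rw [h1, hmap, integral_prod_mul F G,
      integral_map hWmeas.aemeasurable hFcont.aestronglyMeasurable,
      integral_map hXmeas.aemeasurable hGcont.aestronglyMeasurable, mul_comm]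
  rw [hsplit, hprod]
end
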